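/- Let θ ∈ ℝ, p ∈ [0,1], let v_θ = cos(θ/2) |00⟩ − i·sin(θ/2) |11⟩ ∈ ℂ² ⊗ ℂ², and let ρ = (1−p)·v_θ v_θᴴ + (p/4)·I be the output of the depolarizing channel with error probability p. Then the mixed-state stabilizer 2-Rényi entropy satisfies M̃₂(ρ) = −log₂[ 4( (p−1)⁴ cos(4θ) + 5(p−2)p((p−2)p + 2) + 7 ) ] + log₂( 3(p−2)p + 4 ) + 3. -/

import Mathlib

noncomputable section
open Matrix Kronecker

/-- The four single-qubit Pauli matrices I, X, Y, Z. -/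
def pauli : Fin 4 → Matrix (Fin 2) (Fin 2) ℂ :=
  ![1, !![0, 1; 1, 0], !![0, -Complex.I; Complex.I, 0], !![1, 0; 0, -1]]

/-- Two-qubit Pauli strings σ₁ ⊗ σ₂. -/
def pauli2 (a : Fin 4 × Fin 4) : Matrix (Fin 2 × Fin 2) (Fin 2 × Fin 2) ℂ :=
  pauli a.1 ⊗ₖ pauli a.2

/-- Rank-one density matrix v vᴴ. -/
def dm {ι : Type*} (v : ι → ℂ) : Matrix ι ι ℂ := Matrix.vecMulVec v (star v)

/-- Mixed-state stabilizer 2-Rényi entropy of a two-qubit density matrix: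
`M̃₂(ρ) = −log₂((1/4)·Σ_P |Tr(P ρ)|⁴) + log₂(Tr(ρ²))`. -/
def M2mixed (ρ : Matrix (Fin 2 × Fin 2) (Fin 2 × Fin 2) ℂ) : ℝ :=
  - Real.logb 2 ((1 / 4) * ∑ a : Fin 4 × Fin 4, ‖(pauli2 a * ρ).trace‖ ^ 4) +
    Real.logb 2 ((ρ * ρ).trace.re)

/-- The non-local-magic state cos(θ/2)|00⟩ − i sin(θ/2)|11⟩. -/
def vtheta (θ : ℝ) : Fin 2 × Fin 2 → ℂ := fun p =>
  if p = ((0 : Fin 2), (0 : Fin 2)) then (Real.cos (θ / 2) : ℂ)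
  else if p = ((1 : Fin 2), (1 : Fin 2)) then -Complex.I * (Real.sin (θ / 2) : ℂ) else 0

/-- Auxiliary: the state with explicit real amplitudes. -/
def w (c s : ℝ) : Fin 2 × Fin 2 → ℂ := fun p =>
  if p = ((0 : Fin 2), (0 : Fin 2)) then (c : ℂ)
  else if p = ((1 : Fin 2), (1 : Fin 2)) then -Complex.I * (s : ℂ) else 0

lemma vtheta_eq (θ : ℝ) : vtheta θ = w (Real.cos (θ/2)) (Real.sin (θ/2)) := rfl

lemma abs4 (z : ℂ) : ‖z‖ ^ 4 = (z.re^2 + z.im^2)^2 := by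
  have h2 : ‖z‖ ^ 4 = (‖z‖ ^ 2)^2 := by ring
  rw [h2, Complex.sq_norm, Complex.normSq_apply]; ring

lemma tr_eval (c s p : ℝ) (h : c^2 + s^2 = 1) :
    ((((1 - p : ℝ) : ℂ) • dm (w c s) + ((p / 4 : ℝ) : ℂ) • (1 : Matrix (Fin 2 × Fin 2) (Fin 2 × Fin 2) ℂ)) *
     (((1 - p : ℝ) : ℂ) • dm (w c s) + ((p / 4 : ℝ) : ℂ) • 1)).trace.re
    = (3*p^2 - 6*p + 4)/4 := by
  simp [Matrix.trace, Matrix.mul_apply, Fintype.sum_prod_type, Fin.sum_univ_succ, dm, w,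
    Matrix.vecMulVec_apply, Matrix.one_apply, Complex.ext_iff, Prod.ext_iff]
  linear_combination (p/2 - p^2/2 + (p-1)^2*(c^2+s^2+1)) * h

lemma sum_eval (c s p : ℝ) (h : c^2 + s^2 = 1) :
    (1 / 4) * ∑ a : Fin 4 × Fin 4, ‖(pauli2 a *
      (((1 - p : ℝ) : ℂ) • dm (w c s) + ((p / 4 : ℝ) : ℂ) • (1 : Matrix (Fin 2 × Fin 2) (Fin 2 × Fin 2) ℂ))).trace‖ ^ 4
    = (1 + (1-p)^4 * (1 + 2*(c^2-s^2)^4 + 2*(2*c*s)^4))/4 := by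
  simp only [abs4]
  simp [Matrix.trace, Matrix.mul_apply, Fintype.sum_prod_type, Fin.sum_univ_succ, dm, w,
    pauli2, pauli, Matrix.kroneckerMap_apply,
    Matrix.vecMulVec_apply, Matrix.one_apply, Complex.ext_iff, Prod.ext_iff]
  linear_combination ((1/2) + (-1)*p + (3/2)*p^2 + (-1)*p^3 + (1/2)*s^2 + (-1)*s^2*p + (3/2)*s^2*p^2 + (-2)*s^2*p^3 + s^2*p^4 + (1/2)*s^4 + (-1)*s^4*p + s^4*p^3 + (-1/2)*s^4*p^4 + (1/2)*s^6 + (-2)*s^6*p + (3)*s^6*p^2 + (-2)*s^6*p^3 + (1/2)*s^6*p^4 + (1/2)*c^2 + (-1)*c^2*p + (3/2)*c^2*p^2 + (-2)*c^2*p^3 + c^2*p^4 + c^2*s^2 + (-2)*c^2*s^2*p + (2)*c^2*s^2*p^3 + (-1)*c^2*s^2*p^4 + (3/2)*c^2*s^4 + (-6)*c^2*s^4*p + (9)*c^2*s^4*p^2 + (-6)*c^2*s^4*p^3 + (3/2)*c^2*s^4*p^4 + (1/2)*c^4 + (-1)*c^4*p + c^4*p^3 + (-1/2)*c^4*p^4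 + (3/2)*c^4*s^2 + (-6)*c^4*s^2*p + (9)*c^4*s^2*p^2 + (-6)*c^4*s^2*p^3 + (3/2)*c^4*s^2*p^4 + (1/2)*c^6 + (-2)*c^6*p + (3)*c^6*p^2 + (-2)*c^6*p^3 + (1/2)*c^6*p^4) * h

theorem stabilizer_entropy_depolarized_nlm_state
    (θ : ℝ) (p : ℝ) (hp : p ∈ Set.Icc (0 : ℝ) 1)
    (ρ : Matrix (Fin 2 × Fin 2) (Fin 2 × Fin 2) ℂ)
    (hρ : ρ = ((1 - p : ℝ) : ℂ) • dm (vtheta θ) +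
      ((p / 4 : ℝ) : ℂ) • (1 : Matrix (Fin 2 × Fin 2) (Fin 2 × Fin 2) ℂ)) :
    M2mixed ρ =
      - Real.logb 2
          (4 * ((p - 1) ^ 4 * Real.cos (4 * θ) + 5 * (p - 2) * p * ((p - 2) * p + 2) + 7)) +
        Real.logb 2 (3 * (p - 2) * p + 4) + 3 := by
  have h : Real.cos (θ/2)^2 + Real.sin (θ/2)^2 = 1 := Real.cos_sq_add_sin_sq _
  set c := Real.cos (θ/2) with hc
  set s := Real.sin (θ/2) with hs
  subst hρ
  unfold M2mixed
  rw [vtheta_eq θ, ← hc, ← hs, sum_eval c s p h, tr_eval c s p h]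
  -- trig: cos(4θ) in terms of c, s
  have h1 : Real.cos θ = c^2 - s^2 := by
    rw [show θ = 2*(θ/2) by ring, Real.cos_two_mul']
  have h2 : Real.cos (2*θ) = 2*(c^2-s^2)^2 - 1 := by
    rw [Real.cos_two_mul, h1]
  have h3 : Real.cos (4*θ) = 2*(2*(c^2-s^2)^2-1)^2 - 1 := by
    rw [show (4:ℝ)*θ = 2*(2*θ) by ring, Real.cos_two_mul, h2]
  set E := (p - 1) ^ 4 * Real.cos (4 * θ) + 5 * (p - 2) * p * ((p - 2) * p + 2) + 7 with hE
  have hA : (1 + (1-p)^4 * (1 + 2*(c^2-s^2)^4 + 2*(2*c*s)^4))/4 = E/8 := by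
    rw [hE, h3]
    linear_combination ((1-p)^4 * ((2*c*s)^2 - (c^2-s^2)^2 + 1) * (c^2+s^2+1) / 2) * h
  have hq : (0:ℝ) ≤ (p-1)^4 := by positivity
  have hcos : (0:ℝ) ≤ Real.cos (4*θ) + 1 := by linarith [Real.neg_one_le_cos (4*θ)]
  have hEpos : 0 < E := by
    have := mul_nonneg hq hcos
    nlinarith [sq_nonneg ((p-1)^2)]
  have hDpos : 0 < 3 * (p - 2) * p + 4 := by nlinarith [sq_nonneg (p-1)]
  have hB : (3*p^2 - 6*p + 4)/4 = (3 * (p - 2) * p + 4)/4 := by ring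
  rw [hA, hB]
  have l8 : Real.logb 2 8 = 3 := by
    simp [Real.logb_self_eq_one, show (8:ℝ) = 2^(3:ℕ) by norm_num, Real.logb_pow]
  have l4 : Real.logb 2 4 = 2 := by
    simp [Real.logb_self_eq_one, show (4:ℝ) = 2^(2:ℕ) by norm_num, Real.logb_pow]
  rw [Real.logb_div hEpos.ne' (by norm_num), Real.logb_div hDpos.ne' (by norm_num),
    Real.logb_mul (by norm_num) hEpos.ne', l8, l4]
  ring
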